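/- Let F be a field of characteristic not 2 and let T_n be the commutative algebra with basis {e, n_1, …, n_{n−1}} and products e² = e, e n_1 = n_1, n_2² = n_1, e n_i = (1/2) n_i for 2 ≤ i ≤ n−1, all other products zero. Then for any idempotent a = e − α² n_1 + Σ_{i=2}^{n−1} α_i n_i with α = α_2, the 1-eigenspace of left multiplication by a is spanned by {a, n_1}, the 0-eigenspace is zero, and the (1/2)-eigenspace is spanned by {2α n_1 − n_2} ∪ {n_i : 3 ≤ i ≤ n−1}. -/

import Mathlib

/-- The Jordan algebra `T_{n+3}` on basis `e = δ_0, n_1 = δ_1, n_2 = δ_2, …`: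
`e² = e`, `e n₁ = n₁`, `n₂² = n₁`, `e nᵢ = ½ nᵢ` for `i ≥ 2`, other
products zero. -/
def Tmul {F : Type*} [Field F] (n : ℕ) (x y : Fin (n + 3) → F) :
    Fin (n + 3) → F :=
  fun i =>
    if i = 0 then x 0 * y 0
    else if i = 1 then x 0 * y 1 + x 1 * y 0 + x 2 * y 2
    else (2 : F)⁻¹ * (x 0 * y i + x i * y 0)

lemma Tmul_add {F : Type*} [Field F] (n : ℕ) (a y z : Fin (n + 3) → F) :
    Tmul n a (y + z) = Tmul n a y + Tmul n a z := by
  funext i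
  simp only [Tmul, Pi.add_apply]
  split_ifs <;> ring

lemma Tmul_smul {F : Type*} [Field F] (n : ℕ) (a y : Fin (n + 3) → F) (c : F) :
    Tmul n a (c • y) = c • Tmul n a y := by
  funext i
  simp only [Tmul, Pi.smul_apply, smul_eq_mul]
  split_ifs <;> ring

lemma Tmul_apply_zero {F : Type*} [Field F] (n : ℕ) (x y : Fin (n + 3) → F) :
    Tmul n x y 0 = x 0 * y 0 := by
  simp [Tmul]

lemma Tmul_apply_one {F : Type*} [Field F] (n : ℕ) (x y : Fin (n + 3) → F) :
    Tmul n x y 1 = x 0 * y 1 + x 1 * y 0 + x 2 * y 2 := by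
  have h10 : (1 : Fin (n + 3)) ≠ 0 := by simp [Fin.ext_iff]
  simp [Tmul, h10]

lemma Tmul_apply_ne {F : Type*} [Field F] (n : ℕ) (x y : Fin (n + 3) → F)
    (i : Fin (n + 3)) (hi0 : i ≠ 0) (hi1 : i ≠ 1) :
    Tmul n x y i = (2 : F)⁻¹ * (x 0 * y i + x i * y 0) := by
  simp [Tmul, hi0, hi1]

lemma eq_sum_single {F : Type*} [Field F] {m : ℕ} (w : Fin m → F) :
    w = ∑ i, w i • (Pi.single i 1 : Fin m → F) := by
  funext j
  simp [Pi.single_apply]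

lemma mem_span_of_low_zero {F : Type*} [Field F] {m : ℕ} (w : Fin m → F)
    (hw : ∀ i : Fin m, (i : ℕ) < 3 → w i = 0) :
    w ∈ Submodule.span F
      {v : Fin m → F | ∃ i : Fin m, 3 ≤ (i : ℕ) ∧ v = Pi.single i 1} := by
  rw [eq_sum_single w]
  apply Submodule.sum_mem
  intro i _
  by_cases hi : 3 ≤ (i : ℕ)
  · exact Submodule.smul_mem _ _ (Submodule.subset_span ⟨i, hi, rfl⟩)
  · rw [hw i (by omega)]
    simp

/-- eigenspaces of an idempotent
`a = e − α² n₁ + Σ_{i≥2} αᵢ nᵢ` (with `α = α₂`) of `T_n`: the 1-eigenspace is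
spanned by `{a, n₁}`, the 0-eigenspace is zero, and the ½-eigenspace is
spanned by `{2α n₁ − n₂} ∪ {nᵢ : i ≥ 3}`. -/
theorem stmt_17 {F : Type*} [Field F] (hchar : (2 : F) ≠ 0) (n : ℕ)
    (a : Fin (n + 3) → F) (h0 : a 0 = 1) (h1 : a 1 = -(a 2) ^ 2) :
    {y : Fin (n + 3) → F | Tmul n a y = y} =
      ↑(Submodule.span F ({a, Pi.single 1 1} : Set (Fin (n + 3) → F))) ∧
    {y : Fin (n + 3) → F | Tmul n a y = 0} = {0} ∧
    {y : Fin (n + 3) → F | Tmul n a y = (2 : F)⁻¹ • y} =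
      ↑(Submodule.span F
        ({(2 * a 2) • (Pi.single 1 1 : Fin (n + 3) → F) - Pi.single 2 1} ∪
          {v : Fin (n + 3) → F |
            ∃ i : Fin (n + 3), 3 ≤ (i : ℕ) ∧ v = Pi.single i 1})) := by
  have hinv : (2 : F)⁻¹ * 2 = 1 := inv_mul_cancel₀ hchar
  have h10 : (1 : Fin (n + 3)) ≠ 0 := by simp [Fin.ext_iff]
  have h20 : (2 : Fin (n + 3)) ≠ 0 := by simp [Fin.ext_iff, Nat.mod_eq_of_lt (show 2 < n + 3 by omega)]
  have h21 : (2 : Fin (n + 3)) ≠ 1 := by simp [Fin.ext_iff, Nat.mod_eq_of_lt (show 2 < n + 3 by omega)]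
  have h01 := Ne.symm h10
  have h02 := Ne.symm h20
  have h12 := Ne.symm h21
  refine ⟨?_, ?_, ?_⟩
  · -- 1-eigenspace
    ext y
    simp only [Set.mem_setOf_eq, SetLike.mem_coe]
    constructor
    · intro h
      have key : ∀ i : Fin (n + 3), i ≠ 0 → i ≠ 1 → y i = a i * y 0 := by
        intro i hi0 hi1
        have hh := congrFun h i
        rw [Tmul_apply_ne n a y i hi0 hi1, h0] at hh
        linear_combination (-2 : F) * hh + (y i + a i * y 0) * hinv
      have hy : y = y 0 • a + (y 1 - y 0 * a 1) • (Pi.single 1 1 : Fin (n + 3) → F) := by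
        funext i
        simp only [Pi.add_apply, Pi.smul_apply, smul_eq_mul]
        by_cases hi0 : i = 0
        · subst hi0
          rw [Pi.single_eq_of_ne h01, h0]
          ring
        by_cases hi1 : i = 1
        · subst hi1
          rw [Pi.single_eq_same]
          ring
        · rw [Pi.single_eq_of_ne hi1, key i hi0 hi1]
          ring
      rw [hy]
      exact Submodule.add_mem _
        (Submodule.smul_mem _ _ (Submodule.subset_span (Set.mem_insert _ _)))
        (Submodule.smul_mem _ _ (Submodule.subset_span
          (Set.mem_insert_of_mem _ rfl)))
    · intro h
      induction h using Submodule.span_induction with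
      | mem x hx =>
        rcases hx with rfl | rfl
        · funext i
          by_cases hi0 : i = 0
          · subst hi0
            rw [Tmul_apply_zero, h0]
            ring
          by_cases hi1 : i = 1
          · subst hi1
            rw [Tmul_apply_one, h0, h1]
            ring
          · rw [Tmul_apply_ne n x x i hi0 hi1, h0]
            linear_combination x i * hinv
        · funext i
          by_cases hi0 : i = 0
          · subst hi0
            rw [Tmul_apply_zero, h0, Pi.single_eq_of_ne h01]
            ring
          by_cases hi1 : i = 1
          · subst hi1
            rw [Tmul_apply_one, h0, h1, Pi.single_eq_same,
              Pi.single_eq_of_ne h01, Pi.single_eq_of_ne h21]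
            ring
          · rw [Tmul_apply_ne n a _ i hi0 hi1, h0,
              Pi.single_eq_of_ne hi1, Pi.single_eq_of_ne h01]
            ring
      | zero =>
        funext i
        simp only [Tmul, Pi.zero_apply]
        split_ifs <;> ring
      | add x z _ _ hx hz => rw [Tmul_add, hx, hz]
      | smul c x _ hx => rw [Tmul_smul, hx]
  · -- 0-eigenspace
    ext y
    simp only [Set.mem_setOf_eq, Set.mem_singleton_iff]
    constructor
    · intro h
      have hy0 : y 0 = 0 := by
        have hh := congrFun h 0
        rw [Tmul_apply_zero, h0, one_mul] at hh
        exact hh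
      have key : ∀ i : Fin (n + 3), i ≠ 0 → i ≠ 1 → y i = 0 := by
        intro i hi0 hi1
        have hh := congrFun h i
        rw [Tmul_apply_ne n a y i hi0 hi1, h0] at hh
        simp only [Pi.zero_apply, hy0, mul_zero, add_zero, one_mul] at hh
        rcases mul_eq_zero.mp hh with hc | hc
        · exact absurd hc (inv_ne_zero hchar)
        · exact hc
      have hy2 : y 2 = 0 := key 2 h20 h21
      have hy1 : y 1 = 0 := by
        have hh := congrFun h 1
        rw [Tmul_apply_one, h0] at hh
        simp only [Pi.zero_apply, hy0, hy2, mul_zero, add_zero, one_mul] at hh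
        exact hh
      funext i
      by_cases hi0 : i = 0
      · subst hi0; exact hy0
      by_cases hi1 : i = 1
      · subst hi1; exact hy1
      · exact key i hi0 hi1
    · rintro rfl
      funext i
      simp only [Tmul, Pi.zero_apply]
      split_ifs <;> ring
  · -- ½-eigenspace
    ext y
    simp only [Set.mem_setOf_eq, SetLike.mem_coe]
    constructor
    · intro h
      have hy0 : y 0 = 0 := by
        have hh := congrFun h 0
        rw [Tmul_apply_zero, h0, one_mul, Pi.smul_apply, smul_eq_mul] at hh
        linear_combination (2 : F) * hh + y 0 * hinv
      have hy1 : y 1 = -(2 * a 2 * y 2) := by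
        have hh := congrFun h 1
        rw [Tmul_apply_one, h0, Pi.smul_apply, smul_eq_mul] at hh
        rw [hy0] at hh
        linear_combination (2 : F) * hh + y 1 * hinv
      set v : Fin (n + 3) → F :=
        (2 * a 2) • (Pi.single 1 1 : Fin (n + 3) → F) - Pi.single 2 1 with hv
      have hvi0 : v 0 = 0 := by
        simp [hv, Pi.single_apply, h01, h02]
      have hvi1 : v 1 = 2 * a 2 := by
        simp [hv, Pi.single_apply, h12]
      have hvi2 : v 2 = -1 := by
        simp [hv, Pi.single_apply, h21]
      have hdecomp : y = (-(y 2)) • v + (y + (y 2) • v) := by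
        funext i
        simp only [Pi.add_apply, Pi.smul_apply, smul_eq_mul]
        ring
      rw [hdecomp]
      refine Submodule.add_mem _
        (Submodule.smul_mem _ _ (Submodule.subset_span (Or.inl rfl))) ?_
      have hlow : ∀ i : Fin (n + 3), (i : ℕ) < 3 → (y + (y 2) • v) i = 0 := by
        intro i hi
        have h3 : (i : ℕ) = 0 ∨ (i : ℕ) = 1 ∨ (i : ℕ) = 2 := by omega
        rcases h3 with hc | hc | hc
        · have hx : i = 0 := Fin.ext (by simp [hc])
          subst hx
          simp [hvi0, hy0]
        · have hx : i = 1 := Fin.ext (by simp [hc])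
          subst hx
          simp only [Pi.add_apply, Pi.smul_apply, smul_eq_mul, hvi1, hy1]
          ring
        · have hx : i = 2 := Fin.ext (by simp [hc, Nat.mod_eq_of_lt (show 2 < n + 3 by omega)])
          subst hx
          simp only [Pi.add_apply, Pi.smul_apply, smul_eq_mul, hvi2]
          ring
      exact Submodule.span_mono Set.subset_union_right
        (mem_span_of_low_zero _ hlow)
    · intro h
      induction h using Submodule.span_induction with
      | mem x hx =>
        rcases hx with rfl | ⟨i, hi3, rfl⟩
        · set v : Fin (n + 3) → F :=
            (2 * a 2) • (Pi.single 1 1 : Fin (n + 3) → F) - Pi.single 2 1 with hv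
          have hvi0 : v 0 = 0 := by
            simp [hv, Pi.single_apply, h01, h02]
          have hvi1 : v 1 = 2 * a 2 := by
            simp [hv, Pi.single_apply, h12]
          have hvi2 : v 2 = -1 := by
            simp [hv, Pi.single_apply, h21]
          funext j
          rw [Pi.smul_apply, smul_eq_mul]
          by_cases hj0 : j = 0
          · subst hj0
            rw [Tmul_apply_zero, h0, hvi0]
            ring
          by_cases hj1 : j = 1
          · subst hj1
            rw [Tmul_apply_one, h0, hvi0, hvi1, hvi2]
            linear_combination (-(a 2)) * hinv
          · rw [Tmul_apply_ne n a v j hj0 hj1, h0, hvi0]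
            ring
        · have hi0 : i ≠ 0 := by rintro rfl; simp at hi3
          have hi1 : i ≠ 1 := by rintro rfl; simp at hi3
          have hi2 : i ≠ 2 := by rintro rfl; simp [Nat.mod_eq_of_lt (show 2 < n + 3 by omega)] at hi3
          funext j
          rw [Pi.smul_apply, smul_eq_mul]
          by_cases hj0 : j = 0
          · subst hj0
            rw [Tmul_apply_zero, h0, Pi.single_eq_of_ne (Ne.symm hi0)]
            ring
          by_cases hj1 : j = 1
          · subst hj1
            rw [Tmul_apply_one, h0, Pi.single_eq_of_ne (Ne.symm hi1),
              Pi.single_eq_of_ne (Ne.symm hi0), Pi.single_eq_of_ne (Ne.symm hi2)]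
            ring
          · rw [Tmul_apply_ne n a _ j hj0 hj1, h0,
              Pi.single_eq_of_ne (Ne.symm hi0)]
            ring
      | zero =>
        rw [smul_zero]
        funext i
        simp only [Tmul, Pi.zero_apply]
        split_ifs <;> ring
      | add x z _ _ hx hz => rw [Tmul_add, hx, hz, smul_add]
      | smul c x _ hx => rw [Tmul_smul, hx, smul_comm]
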